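/- Let L be a single-generated (one-generated) finite-dimensional nilpotent Leibniz superalgebra over ℂ of dimension n + m with dim L₀ = n and dim L₁ = m, generated by an odd element, and of maximal nilindex n + m + 1. Then m = n or m = n + 1; specifically, if n + m is even then m = n, and if n + m is odd then m = n + 1. -/

import Mathlib

/-- The descending central series: `dcs br 0 = L¹ = L`, `dcs br k = L^{k+1}`. -/
def dcs (K : Type*) {V : Type*} [Field K] [AddCommGroup V] [Module K V]
    (br : V → V → V) : ℕ → Submodule K V
  | 0 => ⊤
  | k + 1 => Submodule.span K {v : V | ∃ a ∈ dcs K br k, ∃ b : V, v = br a b}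

/-- Powers of a generator: `pw br y k = y^{k+1}`. -/
def pw {V : Type*} (br : V → V → V) (y : V) : ℕ → V :=
  fun k => Nat.rec y (fun _ v => br v y) k

/-- A single-generated complex nilpotent Leibniz superalgebra of dimension
`n + m` (`dim L₀ = n`, `dim L₁ = m`), generated by an odd element and of
maximal nilindex `n + m + 1`, satisfies `m = n` if `n + m` is even and
`m = n + 1` if `n + m` is odd; in particular `m = n` or `m = n + 1`. -/
theorem single_generated_odd_maximal_nilindex_dims
    {V : Type*} [AddCommGroup V] [Module ℂ V] [FiniteDimensional ℂ V]
    (L0 L1 : Submodule ℂ V) (br : V →ₗ[ℂ] V →ₗ[ℂ] V)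
    (hsup : L0 ⊔ L1 = ⊤) (hinf : L0 ⊓ L1 = ⊥)
    (hgrade : ∀ (a b : Bool), ∀ x ∈ cond a L1 L0, ∀ y ∈ cond b L1 L0,
      br x y ∈ cond (Bool.xor a b) L1 L0)
    (hleib : ∀ (a b : Bool) (x : V), ∀ y ∈ cond a L1 L0, ∀ z ∈ cond b L1 L0,
      br x (br y z) = br (br x y) z - (cond (a && b) (-1 : ℂ) 1) • br (br x z) y)
    (n m : ℕ) (hnm : 1 ≤ n + m)
    (hdim0 : Module.finrank ℂ L0 = n) (hdim1 : Module.finrank ℂ L1 = m)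
    (y : V) (hy : y ∈ L1)
    (hgen : ∀ P : Submodule ℂ V,
      y ∈ P → (∀ a ∈ P, ∀ b ∈ P, br a b ∈ P) → P = ⊤)
    (hnil : dcs ℂ (fun u v => br u v) (n + m) = ⊥)
    (hnil' : dcs ℂ (fun u v => br u v) (n + m - 1) ≠ ⊥) :
    (Even (n + m) → m = n) ∧ (Odd (n + m) → m = n + 1) ∧ (m = n ∨ m = n + 1) := by
  classical
  set N := n + m with hN
  set w : ℕ → V := pw (fun u v => br u v) y with hwdef
  have hw0 : w 0 = y := rfl
  have hws : ∀ k, w (k + 1) = br (w k) y := fun _ => rfl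
  -- parity of powers
  have par : ∀ k, (Even k → w k ∈ L1) ∧ (¬ Even k → w k ∈ L0) := by
    intro k
    induction k with
    | zero => exact ⟨fun _ => hy, fun h => absurd Even.zero h⟩
    | succ k ih =>
      constructor
      · intro h
        rw [Nat.even_add_one] at h
        exact hgrade false true (w k) (ih.2 h) y hy
      · intro h
        rw [Nat.even_add_one, not_not] at h
        exact hgrade true true (w k) (ih.1 h) y hy
  -- spans of tails of powers
  set Sp : ℕ → Submodule ℂ V := fun c => Submodule.span ℂ (w '' {j | c ≤ j}) with hSpdef
  have hSpMem : ∀ c j, c ≤ j → w j ∈ Sp c := fun c j hj =>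
    Submodule.subset_span ⟨j, hj, rfl⟩
  have hSpMono : ∀ {c c' : ℕ}, c ≤ c' → Sp c' ≤ Sp c := fun h =>
    Submodule.span_mono (Set.image_mono fun j hj => le_trans h hj)
  have shift : ∀ c, ∀ x ∈ Sp c, br x y ∈ Sp (c + 1) := by
    intro c x hx
    have hle : Sp c ≤ (Sp (c + 1)).comap (br.flip y) := by
      rw [Submodule.span_le]
      rintro _ ⟨j, hj, rfl⟩
      have hj' : c ≤ j := hj
      exact hSpMem (c + 1) (j + 1) (by omega)
    exact hle hx
  have BB : ∀ i j, br (w j) (w i) ∈ Sp (j + i + 1) := by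
    intro i
    induction i with
    | zero => intro j; exact hSpMem _ _ le_rfl
    | succ i ih =>
      intro j
      have h2 : br (w (j + 1)) (w i) ∈ Sp (j + i + 2) := by
        have h := ih (j + 1)
        have e : j + 1 + i + 1 = j + i + 2 := by omega
        rwa [e] at h
      have h1 : br (br (w j) (w i)) y ∈ Sp (j + i + 2) := shift _ _ (ih j)
      show br (w j) (br (w i) y) ∈ Sp (j + i + 2)
      by_cases hk : Even i
      · rw [hleib true true (w j) (w i) ((par i).1 hk) y hy]
        exact Submodule.sub_mem _ h1 (Submodule.smul_mem _ _ h2)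
      · rw [hleib false true (w j) (w i) ((par i).2 hk) y hy]
        exact Submodule.sub_mem _ h1 (Submodule.smul_mem _ _ h2)
  have key : ∀ k, ∀ a ∈ Sp k, ∀ b ∈ Sp 0, br a b ∈ Sp (k + 1) := by
    intro k a ha b hb
    have keyi : ∀ i, br a (w i) ∈ Sp (k + 1) := by
      intro i
      have hle : Sp k ≤ (Sp (k + 1)).comap (br.flip (w i)) := by
        rw [Submodule.span_le]
        rintro _ ⟨j, hj, rfl⟩
        have hj' : k ≤ j := hj
        exact hSpMono (by omega : k + 1 ≤ j + i + 1) (BB i j)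
      exact hle ha
    have hle : Sp 0 ≤ (Sp (k + 1)).comap (br a) := by
      rw [Submodule.span_le]
      rintro _ ⟨i, hi, rfl⟩
      exact keyi i
    exact hle hb
  have hSpTop : Sp 0 = ⊤ :=
    hgen (Sp 0) (hSpMem 0 0 le_rfl)
      (fun a ha b hb => hSpMono (by omega : (0:ℕ) ≤ 1) (key 0 a ha b hb))
  have hdcs : ∀ k, dcs ℂ (fun u v => br u v) k = Sp k := by
    intro k
    induction k with
    | zero => simp only [dcs]; exact hSpTop.symm
    | succ k ih =>
      simp only [dcs]
      apply le_antisymm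
      · rw [Submodule.span_le]
        rintro v ⟨a, ha, b, rfl⟩
        rw [ih] at ha
        exact key k a ha b (hSpTop ▸ Submodule.mem_top)
      · rw [Submodule.span_le]
        rintro _ ⟨j, hj, rfl⟩
        have hj' : k + 1 ≤ j := hj
        obtain ⟨j', rfl⟩ : ∃ j', j = j' + 1 := ⟨j - 1, by omega⟩
        refine Submodule.subset_span ⟨w j', ?_, y, (hws j')⟩
        rw [ih]
        exact hSpMem k j' (by omega)
  have hzero : ∀ j, N ≤ j → w j = 0 := by
    intro j hj
    have h : w j ∈ (⊥ : Submodule ℂ V) := by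
      rw [← hnil, hdcs]
      exact hSpMem N j hj
    simpa using h
  have hne : w (N - 1) ≠ 0 := by
    intro h0
    apply hnil'
    rw [hdcs, hSpdef, Submodule.span_eq_bot]
    rintro _ ⟨j, hj, rfl⟩
    rcases eq_or_lt_of_le (show N - 1 ≤ j from hj) with h | h
    · rw [← h]; exact h0
    · exact hzero j (by omega)
  -- dimension of V
  have hrV : Module.finrank ℂ V = N := by
    have h := Submodule.finrank_sup_add_finrank_inf_eq L0 L1
    rw [hsup, hinf, hdim0, hdim1, finrank_top, finrank_bot, add_zero] at h
    exact h
  -- the first N powers form a basis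
  set b : Fin N → V := fun i => w i with hbdef
  have htop : ⊤ ≤ Submodule.span ℂ (Set.range b) := by
    rw [← hSpTop, hSpdef, Submodule.span_le]
    rintro _ ⟨j, hj, rfl⟩
    by_cases hjN : j < N
    · exact Submodule.subset_span ⟨⟨j, hjN⟩, rfl⟩
    · rw [hzero j (by omega)]; exact Submodule.zero_mem _
  have hcard : Fintype.card (Fin N) = Module.finrank ℂ V := by
    rw [Fintype.card_fin, hrV]
  have hli : LinearIndependent ℂ b :=
    linearIndependent_of_top_le_span_of_card_eq_finrank htop hcard
  -- count even indices
  have hm : (N + 1) / 2 ≤ m := by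
    have hlt : ∀ i : Fin ((N + 1) / 2), 2 * (i : ℕ) < N := fun i => by
      have := i.2; omega
    set g : Fin ((N + 1) / 2) → L1 := fun i =>
      ⟨w (2 * i), (par (2 * i)).1 (by rw [Nat.even_iff]; omega)⟩ with hgdef
    have hcomp : LinearIndependent ℂ
        (fun i : Fin ((N + 1) / 2) => b ⟨2 * i, hlt i⟩) :=
      hli.comp (fun i : Fin ((N + 1) / 2) => ⟨2 * (i : ℕ), hlt i⟩) (fun i i' h => by
        apply Fin.ext
        have : (2 * (i : ℕ) : ℕ) = 2 * (i' : ℕ) := congrArg Fin.val h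
        omega)
    have hgli : LinearIndependent ℂ g := LinearIndependent.of_comp L1.subtype hcomp
    have := hgli.fintype_card_le_finrank
    rwa [Fintype.card_fin, hdim1] at this
  have hn : N / 2 ≤ n := by
    have hlt : ∀ i : Fin (N / 2), 2 * (i : ℕ) + 1 < N := fun i => by
      have := i.2; omega
    set g : Fin (N / 2) → L0 := fun i =>
      ⟨w (2 * i + 1), (par (2 * i + 1)).2 (by rw [Nat.even_iff]; omega)⟩ with hgdef
    have hcomp : LinearIndependent ℂ
        (fun i : Fin (N / 2) => b ⟨2 * i + 1, hlt i⟩) :=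
      hli.comp (fun i : Fin (N / 2) => ⟨2 * (i : ℕ) + 1, hlt i⟩) (fun i i' h => by
        apply Fin.ext
        have : (2 * (i : ℕ) + 1 : ℕ) = 2 * (i' : ℕ) + 1 := congrArg Fin.val h
        omega)
    have hgli : LinearIndependent ℂ g := LinearIndependent.of_comp L0.subtype hcomp
    have := hgli.fintype_card_le_finrank
    rwa [Fintype.card_fin, hdim0] at this
  refine ⟨fun h => ?_, fun h => ?_, ?_⟩
  · obtain ⟨k, hk⟩ := h; omega
  · obtain ⟨k, hk⟩ := h; omega
  · omega
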